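/- arXiv:2008.04394 — 5 statements merged into one kernel-verified Lean document; each statement's English description precedes it below -/
import Mathlib

section
/- Consider K subgroups g = 1,…,K, each with treated set T_g of size n_{1g} > 0 and control set C_g, covariate vectors φ_i ∈ ℝ^p, and weights γ_i on control units; let n₁ = Σ_g n_{1g}. Suppose each control outcome satisfies Y_i = ⟨η_{G_i}, φ_i⟩ + ε_i, where η_g ∈ ℝ^p is a subgroup-specific coefficient vector, and let η̄ = (1/K) Σ_{g=1}^K η_g. Define μ̂_{0g} = (1/n_{1g}) Σ_{i∈C_g} γ_i Y_i, the aggregated estimator μ̂₀ = Σ_{g=1}^K (n_{1g}/n₁) μ̂_{0g}, and the oracle quantity μ̃₀ = (1/n₁) Σ_{g=1}^K Σ_{i∈T_g} ⟨η_g, φ_i⟩. Then the error decomposes exactly as μ̂₀ − μ̃₀ = ⟨η̄, (1/n₁) Σ_{i control} γ_i φ_i − (1/n₁) Σ_{i treated} φ_i⟩ + Σ_{g=1}^K (n_{1g}/n₁) ⟨η_g − η̄, (1/n_{1g}) Σ_{i∈C_g} γ_i φ_i − (1/n_{1g}) Σ_{i∈T_g} φ_i⟩ + (1/n₁) Σ_{i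 control} γ_i ε_i, i.e., a global-imbalance term for the average coefficient, a sum of local-imbalance terms for the coefficient deviations, and a weighted noise term. -/
open scoped RealInnerProductSpace

/-- Error decomposition for the aggregated (overall ATT) weighting estimator: the error
splits exactly into a global-imbalance term for the average coefficient, a sum of
local-imbalance terms for the coefficient deviations, and a weighted noise term. -/
theorem aggregated_error_decomposition {ι : Type*} {p K : ℕ} (hK : 0 < K)
    (T C : Fin K → Finset ι)
    (n1 : Fin K → ℕ) (hn1 : ∀ g, n1 g = (T g).card) (hpos : ∀ g, 0 < n1 g)
    (N1 : ℕ) (hN1 : N1 = ∑ g, n1 g)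
    (φ : ι → EuclideanSpace ℝ (Fin p)) (γ ε Y : ι → ℝ)
    (η : Fin K → EuclideanSpace ℝ (Fin p))
    (ηbar : EuclideanSpace ℝ (Fin p)) (hηbar : ηbar = (K : ℝ)⁻¹ • ∑ g, η g)
    (hY : ∀ g, ∀ i ∈ C g, Y i = ⟪η g, φ i⟫ + ε i) :
    (∑ g, ((n1 g : ℝ) / (N1 : ℝ)) * ((1 / (n1 g : ℝ)) * ∑ i ∈ C g, γ i * Y i))
        - (1 / (N1 : ℝ)) * ∑ g, ∑ i ∈ T g, ⟪η g, φ i⟫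
      = ⟪ηbar, (N1 : ℝ)⁻¹ • (∑ g, ∑ i ∈ C g, γ i • φ i)
              - (N1 : ℝ)⁻¹ • (∑ g, ∑ i ∈ T g, φ i)⟫
        + (∑ g, ((n1 g : ℝ) / (N1 : ℝ)) *
            ⟪η g - ηbar, (n1 g : ℝ)⁻¹ • (∑ i ∈ C g, γ i • φ i)
                - (n1 g : ℝ)⁻¹ • (∑ i ∈ T g, φ i)⟫)
        + (1 / (N1 : ℝ)) * ∑ g, ∑ i ∈ C g, γ i * ε i := by
  have hN1pos : 0 < N1 := by
    subst hN1
    exact Finset.sum_pos (fun g _ => hpos g) ⟨⟨0, hK⟩, Finset.mem_univ _⟩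
  have hN1ne : (N1 : ℝ) ≠ 0 := Nat.cast_ne_zero.mpr hN1pos.ne'
  have hne : ∀ g, (n1 g : ℝ) ≠ 0 := fun g => Nat.cast_ne_zero.mpr (hpos g).ne'
  set A : Fin K → ℝ := fun g => ∑ i ∈ C g, γ i * ⟪η g, φ i⟫ with hA
  set A' : Fin K → ℝ := fun g => ∑ i ∈ C g, γ i * ⟪ηbar, φ i⟫ with hA'
  set B : Fin K → ℝ := fun g => ∑ i ∈ T g, ⟪η g, φ i⟫ with hB
  set B' : Fin K → ℝ := fun g => ∑ i ∈ T g, ⟪ηbar, φ i⟫ with hB'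
  set E : Fin K → ℝ := fun g => ∑ i ∈ C g, γ i * ε i with hE
  have hCsum : ∀ g, ∑ i ∈ C g, γ i * Y i = A g + E g := by
    intro g
    rw [hA, hE]
    simp only [← Finset.sum_add_distrib]
    refine Finset.sum_congr rfl fun i hi => ?_
    rw [hY g i hi]; ring
  have hBdef : ∀ g, (∑ i ∈ T g, (⟪η g, φ i⟫ : ℝ)) = B g := fun g => rfl
  have hEdef : ∀ g, (∑ i ∈ C g, γ i * ε i) = E g := fun g => rfl
  have hinner1 : ⟪ηbar, (N1 : ℝ)⁻¹ • (∑ g, ∑ i ∈ C g, γ i • φ i)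
              - (N1 : ℝ)⁻¹ • (∑ g, ∑ i ∈ T g, φ i)⟫
      = (N1 : ℝ)⁻¹ * ((∑ g, A' g) - (∑ g, B' g)) := by
    simp only [inner_sub_right, inner_smul_right, inner_sum, hA', hB', mul_sub]
  have hinner2 : ∀ g, ⟪η g - ηbar, (n1 g : ℝ)⁻¹ • (∑ i ∈ C g, γ i • φ i)
                - (n1 g : ℝ)⁻¹ • (∑ i ∈ T g, φ i)⟫
      = (n1 g : ℝ)⁻¹ * (A g - B g - (A' g - B' g)) := by
    intro g
    simp only [inner_sub_left, inner_sub_right, inner_smul_right, inner_sum,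
      hA, hA', hB, hB', mul_sub, Finset.sum_sub_distrib]
    ring
  simp only [hCsum, hinner1, hinner2, hBdef, hEdef]
  have key : ∀ g : Fin K, ((n1 g : ℝ) / (N1 : ℝ)) * ((1 / (n1 g : ℝ)) * (A g + E g))
        - (1 / (N1 : ℝ)) * B g
      = (N1 : ℝ)⁻¹ * (A' g - B' g)
        + ((n1 g : ℝ) / (N1 : ℝ)) * ((n1 g : ℝ)⁻¹ * (A g - B g - (A' g - B' g)))
        + (1 / (N1 : ℝ)) * E g := by
    intro g
    have h1 : (n1 g : ℝ) * (n1 g : ℝ)⁻¹ = 1 := mul_inv_cancel₀ (hne g)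
    have h2 : ((n1 g : ℝ) / (N1 : ℝ)) = (n1 g : ℝ) * (1 / (N1 : ℝ)) := by ring
    have h3 : (1 / (n1 g : ℝ)) = (n1 g : ℝ)⁻¹ := one_div _
    rw [h2, h3]
    linear_combination ((A g + E g - (A g - B g - (A' g - B' g))) / (N1 : ℝ)) * h1
  calc (∑ g, ((n1 g : ℝ) / (N1 : ℝ)) * ((1 / (n1 g : ℝ)) * (A g + E g)))
        - (1 / (N1 : ℝ)) * ∑ g, B g
      = ∑ g, (((n1 g : ℝ) / (N1 : ℝ)) * ((1 / (n1 g : ℝ)) * (A g + E g))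
          - (1 / (N1 : ℝ)) * B g) := by
        rw [Finset.mul_sum, ← Finset.sum_sub_distrib]
    _ = ∑ g, ((N1 : ℝ)⁻¹ * (A' g - B' g)
          + ((n1 g : ℝ) / (N1 : ℝ)) * ((n1 g : ℝ)⁻¹ * (A g - B g - (A' g - B' g)))
          + (1 / (N1 : ℝ)) * E g) := Finset.sum_congr rfl fun g _ => key g
    _ = (N1 : ℝ)⁻¹ * ((∑ g, A' g) - (∑ g, B' g))
          + (∑ g, ((n1 g : ℝ) / (N1 : ℝ)) * ((n1 g : ℝ)⁻¹ * (A g - B g - (A' g - B' g))))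
          + (1 / (N1 : ℝ)) * ∑ g, E g := by
        rw [Finset.sum_add_distrib, Finset.sum_add_distrib, ← Finset.mul_sum,
          Finset.sum_sub_distrib, ← Finset.mul_sum]
end

section
/- Consider K subgroups g = 1,…,K, each with treated set T_g of size n_{1g} > 0 and control set C_g, covariate vectors φ_i ∈ ℝ^p, weights γ_i on control units, and n₁ = Σ_g n_{1g}. Suppose each control outcome is noiseless and linear within subgroup: Y_i = ⟨η_{G_i}, φ_i⟩ with η_g ∈ ℝ^p, and let η̄ = (1/K) Σ_g η_g. Let μ̂₀ = Σ_g (n_{1g}/n₁) · (1/n_{1g}) Σ_{i∈C_g} γ_i Y_i and μ̃₀ = (1/n₁) Σ_g Σ_{i∈T_g} ⟨η_g, φ_i⟩. Then the bias is controlled by local and global balance: |μ̂₀ − μ̃₀| ≤ ‖η̄‖₂ · ‖(1/n₁) Σ_{i control} γ_i φ_i − (1/n₁) Σ_{i treated} φ_i‖₂ + Σ_{g=1}^K (n_{1g}/n₁) ‖η_g − η̄‖₂ · ‖(1/n_{1g}) Σ_{i∈C_g} γ_i φ_i − (1/n_{1g}) Σ_{i∈T_g} φ_i‖₂. -/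
open scoped RealInnerProductSpace

/-- The bias of the aggregated (overall ATT) weighting estimator is controlled by the
global imbalance (for the average coefficient) plus the weighted sum of local imbalances
(for the coefficient deviations). -/
theorem aggregated_bias_bound {ι : Type*} {p K : ℕ} (hK : 0 < K)
    (T C : Fin K → Finset ι)
    (n1 : Fin K → ℕ) (hn1 : ∀ g, n1 g = (T g).card) (hpos : ∀ g, 0 < n1 g)
    (N1 : ℕ) (hN1 : N1 = ∑ g, n1 g)
    (φ : ι → EuclideanSpace ℝ (Fin p)) (γ Y : ι → ℝ)
    (η : Fin K → EuclideanSpace ℝ (Fin p))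
    (ηbar : EuclideanSpace ℝ (Fin p)) (hηbar : ηbar = (K : ℝ)⁻¹ • ∑ g, η g)
    (hY : ∀ g, ∀ i ∈ C g, Y i = ⟪η g, φ i⟫) :
    |(∑ g, ((n1 g : ℝ) / (N1 : ℝ)) * ((1 / (n1 g : ℝ)) * ∑ i ∈ C g, γ i * Y i))
        - (1 / (N1 : ℝ)) * ∑ g, ∑ i ∈ T g, ⟪η g, φ i⟫|
      ≤ ‖ηbar‖ * ‖(N1 : ℝ)⁻¹ • (∑ g, ∑ i ∈ C g, γ i • φ i)
              - (N1 : ℝ)⁻¹ • (∑ g, ∑ i ∈ T g, φ i)‖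
        + ∑ g, ((n1 g : ℝ) / (N1 : ℝ)) * (‖η g - ηbar‖ *
            ‖(n1 g : ℝ)⁻¹ • (∑ i ∈ C g, γ i • φ i)
                - (n1 g : ℝ)⁻¹ • (∑ i ∈ T g, φ i)‖) := by
  have hN1pos : 0 < N1 := by
    have : Nonempty (Fin K) := Fin.pos_iff_nonempty.mp hK
    rw [hN1]
    exact Finset.sum_pos (fun g _ => hpos g) Finset.univ_nonempty
  have hN1ne : (N1 : ℝ) ≠ 0 := Nat.cast_ne_zero.mpr hN1pos.ne'
  have hn1ne : ∀ g, (n1 g : ℝ) ≠ 0 := fun g => Nat.cast_ne_zero.mpr (hpos g).ne'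
  set Sc : Fin K → EuclideanSpace ℝ (Fin p) := fun g => ∑ i ∈ C g, γ i • φ i with hSc
  set St : Fin K → EuclideanSpace ℝ (Fin p) := fun g => ∑ i ∈ T g, φ i with hSt
  set D : Fin K → EuclideanSpace ℝ (Fin p) :=
    fun g => (n1 g : ℝ)⁻¹ • Sc g - (n1 g : ℝ)⁻¹ • St g with hD
  set w : Fin K → ℝ := fun g => (n1 g : ℝ) / (N1 : ℝ) with hw
  have hws : ∀ g, w g * (n1 g : ℝ)⁻¹ = (N1 : ℝ)⁻¹ := by
    intro g
    rw [hw]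
    simp only []
    rw [div_eq_mul_inv, mul_right_comm, mul_inv_cancel₀ (hn1ne g), one_mul]
  -- per-group inner product identities
  have hinnC : ∀ g, ⟪η g, Sc g⟫ = ∑ i ∈ C g, γ i * Y i := by
    intro g
    rw [hSc, inner_sum]
    refine Finset.sum_congr rfl fun i hi => ?_
    rw [real_inner_smul_right, hY g i hi]
  have hinnT : ∀ g, ⟪η g, St g⟫ = ∑ i ∈ T g, ⟪η g, φ i⟫ := fun g => by
    rw [hSt, inner_sum]
  -- Step 1: the bias equals ∑ g, w g * ⟪η g, D g⟫
  have h1 : (∑ g, ((n1 g : ℝ) / (N1 : ℝ)) * ((1 / (n1 g : ℝ)) * ∑ i ∈ C g, γ i * Y i))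
        - (1 / (N1 : ℝ)) * ∑ g, ∑ i ∈ T g, ⟪η g, φ i⟫
      = ∑ g, w g * ⟪η g, D g⟫ := by
    rw [Finset.mul_sum, ← Finset.sum_sub_distrib]
    refine Finset.sum_congr rfl fun g _ => ?_
    rw [hD]
    simp only [inner_sub_right, real_inner_smul_right, hinnC, hinnT]
    rw [one_div, one_div, mul_sub, ← mul_assoc, ← mul_assoc, hws g]
  -- Step 2: split η g = ηbar + (η g - ηbar)
  have h2 : ∀ g, ⟪η g, D g⟫ = ⟪ηbar, D g⟫ + ⟪η g - ηbar, D g⟫ := by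
    intro g
    rw [inner_sub_left]
    ring
  -- Step 3: weighted sum of D equals the global imbalance vector
  have h3 : ∑ g, w g • D g
      = (N1 : ℝ)⁻¹ • (∑ g, ∑ i ∈ C g, γ i • φ i)
          - (N1 : ℝ)⁻¹ • (∑ g, ∑ i ∈ T g, φ i) := by
    have : ∀ g, w g • D g = (N1 : ℝ)⁻¹ • Sc g - (N1 : ℝ)⁻¹ • St g := by
      intro g
      rw [hD, smul_sub, smul_smul, smul_smul]
      rw [hws g]
    rw [Finset.sum_congr rfl fun g _ => this g, Finset.sum_sub_distrib,
      ← Finset.smul_sum, ← Finset.smul_sum]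
  have h4 : ∑ g, w g * ⟪ηbar, D g⟫
      = ⟪ηbar, (N1 : ℝ)⁻¹ • (∑ g, ∑ i ∈ C g, γ i • φ i)
          - (N1 : ℝ)⁻¹ • (∑ g, ∑ i ∈ T g, φ i)⟫ := by
    rw [← h3, inner_sum]
    exact Finset.sum_congr rfl fun g _ => (real_inner_smul_right _ _ _).symm
  rw [h1]
  calc |∑ g, w g * ⟪η g, D g⟫|
      = |(∑ g, w g * ⟪ηbar, D g⟫) + ∑ g, w g * ⟪η g - ηbar, D g⟫| := by
        rw [← Finset.sum_add_distrib]
        congr 1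
        exact Finset.sum_congr rfl fun g _ => by rw [h2]; ring
    _ ≤ |∑ g, w g * ⟪ηbar, D g⟫| + |∑ g, w g * ⟪η g - ηbar, D g⟫| := abs_add_le _ _
    _ ≤ ‖ηbar‖ * ‖(N1 : ℝ)⁻¹ • (∑ g, ∑ i ∈ C g, γ i • φ i)
            - (N1 : ℝ)⁻¹ • (∑ g, ∑ i ∈ T g, φ i)‖
        + ∑ g, w g * (‖η g - ηbar‖ * ‖D g‖) := by
      gcongr
      · rw [h4]; exact abs_real_inner_le_norm _ _
      · refine (Finset.abs_sum_le_sum_abs _ _).trans ?_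
        refine Finset.sum_le_sum fun g _ => ?_
        rw [abs_mul]
        have hwnn : 0 ≤ w g := by positivity
        rw [abs_of_nonneg hwnn]
        exact mul_le_mul_of_nonneg_left (abs_real_inner_le_norm _ _) hwnn
end

section
/- Let (Ω, P) be a finite probability space carrying random variables X : Ω → 𝒳 (𝒳 finite), a binary treatment W : Ω → {0,1}, and a potential outcome Y⁰ : Ω → ℝ. Define the prognostic score m₀(x) = E[Y⁰ | X = x] and assume ignorability: Y⁰ is conditionally independent of W given X, i.e., for all x with P(X = x) > 0 and all y, P(W = 1, Y⁰ = y | X = x) = P(W = 1 | X = x) · P(Y⁰ = y | X = x). If P(W = 1) > 0, then the counterfactual control mean of the treated is identified by the prognostic score: E[Y⁰ | W = 1] = E[m₀(X) | W = 1]. -/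
open scoped Classical
open Finset

/-- Probability of an event on a finite space weighted by `p`. -/
noncomputable def finPr {Ω : Type*} [Fintype Ω] (p : Ω → ℝ) (A : Ω → Prop) : ℝ :=
  ∑ ω : Ω, if A ω then p ω else 0

/-- Conditional expectation `E[f ∣ A]` on a finite space weighted by `p`. -/
noncomputable def finCondExp {Ω : Type*} [Fintype Ω] (p : Ω → ℝ) (f : Ω → ℝ)
    (A : Ω → Prop) : ℝ :=
  (∑ ω : Ω, if A ω then p ω * f ω else 0) / finPr p A

/-- Weighted sum of `f` over the event `A`. -/
noncomputable def wsum {Ω : Type*} [Fintype Ω] (p f : Ω → ℝ) (A : Ω → Prop) : ℝ :=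
  ∑ ω : Ω, if A ω then p ω * f ω else 0

lemma finCondExp_eq_wsum_div {Ω : Type*} [Fintype Ω] (p f : Ω → ℝ) (A : Ω → Prop) :
    finCondExp p f A = wsum p f A / finPr p A := rfl

lemma finPr_nonneg {Ω : Type*} [Fintype Ω] {p : Ω → ℝ} (hp0 : ∀ ω, 0 ≤ p ω) (A : Ω → Prop) :
    0 ≤ finPr p A := by
  apply Finset.sum_nonneg
  intro ω _
  split_ifs
  exacts [hp0 ω, le_rfl]

lemma finPr_eq_zero_imp {Ω : Type*} [Fintype Ω] {p : Ω → ℝ} (hp0 : ∀ ω, 0 ≤ p ω)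
    {A : Ω → Prop} (h : finPr p A = 0) : ∀ ω, A ω → p ω = 0 := by
  intro ω hA
  have := (Finset.sum_eq_zero_iff_of_nonneg
      (fun ω _ => by split_ifs; exacts [hp0 ω, le_rfl])).mp h ω (Finset.mem_univ ω)
  simpa [hA] using this

lemma finPr_congr {Ω : Type*} [Fintype Ω] (p : Ω → ℝ) {A B : Ω → Prop}
    (h : ∀ ω, A ω ↔ B ω) : finPr p A = finPr p B := by
  unfold finPr
  apply Finset.sum_congr rfl
  intro ω _
  simp [h ω]

lemma sum_decomp {Ω : Type*} [Fintype Ω] (p : Ω → ℝ) (Y0 : Ω → ℝ) (A : Ω → Prop) :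
    wsum p Y0 A
      = ∑ y ∈ Finset.image Y0 Finset.univ, y * finPr p (fun ω => A ω ∧ Y0 ω = y) := by
  unfold wsum
  have key : ∀ ω : Ω, (if A ω then p ω * Y0 ω else 0)
      = ∑ y ∈ Finset.image Y0 Finset.univ, if A ω ∧ Y0 ω = y then y * p ω else 0 := by
    intro ω
    by_cases hA : A ω
    · simp only [hA, true_and]
      rw [Finset.sum_ite_eq]
      simp [mul_comm]
    · simp [hA]
  simp only [key]
  rw [Finset.sum_comm]
  apply Finset.sum_congr rfl
  intro y _
  simp [finPr, Finset.mul_sum, mul_ite, mul_comm]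

lemma partitionX {Ω 𝒳 : Type*} [Fintype Ω] [Fintype 𝒳] (X : Ω → 𝒳) (W : Ω → Bool)
    (p g : Ω → ℝ) :
    wsum p g (fun ω => W ω = true)
      = ∑ x : 𝒳, wsum p g (fun ω => W ω = true ∧ X ω = x) := by
  unfold wsum
  rw [Finset.sum_comm]
  apply Finset.sum_congr rfl
  intro ω _
  by_cases h : W ω = true
  · simp [h, Finset.sum_ite_eq]
  · simp [h]

/-- Under ignorability (`Y⁰ ⟂ W ∣ X`), the counterfactual control mean of the treated is
identified by the prognostic score: `E[Y⁰ ∣ W = 1] = E[m₀(X) ∣ W = 1]`. -/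
theorem identification_by_prognostic_score {Ω 𝒳 : Type*} [Fintype Ω] [Fintype 𝒳]
    (p : Ω → ℝ) (hp0 : ∀ ω, 0 ≤ p ω) (hp1 : ∑ ω : Ω, p ω = 1)
    (X : Ω → 𝒳) (W : Ω → Bool) (Y0 : Ω → ℝ)
    (m0 : 𝒳 → ℝ)
    (hm0 : ∀ x, m0 x = finCondExp p Y0 (fun ω => X ω = x))
    (hignore : ∀ x, 0 < finPr p (fun ω => X ω = x) → ∀ y : ℝ,
      finPr p (fun ω => W ω = true ∧ Y0 ω = y ∧ X ω = x) / finPr p (fun ω => X ω = x)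
        = (finPr p (fun ω => W ω = true ∧ X ω = x) / finPr p (fun ω => X ω = x))
          * (finPr p (fun ω => Y0 ω = y ∧ X ω = x) / finPr p (fun ω => X ω = x)))
    (hW : 0 < finPr p (fun ω => W ω = true)) :
    finCondExp p Y0 (fun ω => W ω = true)
      = finCondExp p (fun ω => m0 (X ω)) (fun ω => W ω = true) := by
  have keyx : ∀ x : 𝒳,
      wsum p Y0 (fun ω => W ω = true ∧ X ω = x)
        = finPr p (fun ω => W ω = true ∧ X ω = x) * m0 x := by
    intro x
    rcases eq_or_lt_of_le (finPr_nonneg hp0 (fun ω => X ω = x)) with hq | hq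
    · have hz : ∀ ω : Ω, X ω = x → p ω = 0 := finPr_eq_zero_imp hp0 hq.symm
      have h1 : wsum p Y0 (fun ω => W ω = true ∧ X ω = x) = 0 := by
        apply Finset.sum_eq_zero
        intro ω _
        by_cases h : W ω = true ∧ X ω = x
        · simp [h, hz ω h.2]
        · simp [h]
      have h2 : finPr p (fun ω => W ω = true ∧ X ω = x) = 0 := by
        apply Finset.sum_eq_zero
        intro ω _
        by_cases h : W ω = true ∧ X ω = x
        · simp [h, hz ω h.2]
        · simp [h]
      rw [h1, h2, zero_mul]
    · set q := finPr p (fun ω => X ω = x) with hqdef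
      have hqne : q ≠ 0 := ne_of_gt hq
      rw [sum_decomp p Y0 (fun ω => W ω = true ∧ X ω = x)]
      have hmul : ∀ y : ℝ,
          finPr p (fun ω => (W ω = true ∧ X ω = x) ∧ Y0 ω = y)
            = finPr p (fun ω => W ω = true ∧ X ω = x)
              * finPr p (fun ω => Y0 ω = y ∧ X ω = x) / q := by
        intro y
        have h := hignore x hq y
        rw [← hqdef] at h
        have heq : finPr p (fun ω => (W ω = true ∧ X ω = x) ∧ Y0 ω = y)
            = finPr p (fun ω => W ω = true ∧ Y0 ω = y ∧ X ω = x) :=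
          finPr_congr p (by tauto)
        rw [heq]
        rw [div_eq_iff hqne] at h
        rw [h]
        field_simp
      simp only [hmul]
      have hm0' : m0 x = (∑ y ∈ Finset.image Y0 Finset.univ,
          y * finPr p (fun ω => Y0 ω = y ∧ X ω = x)) / q := by
        rw [hm0 x, finCondExp_eq_wsum_div, ← hqdef, sum_decomp p Y0 (fun ω => X ω = x)]
        congr 1
        apply Finset.sum_congr rfl
        intro y _
        rw [finPr_congr p (fun ω => by tauto : ∀ ω, (X ω = x ∧ Y0 ω = y) ↔ (Y0 ω = y ∧ X ω = x))]
      rw [hm0', ← mul_div_assoc, Finset.mul_sum, Finset.sum_div]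
      apply Finset.sum_congr rfl
      intro y _
      ring
  rw [finCondExp_eq_wsum_div, finCondExp_eq_wsum_div,
    partitionX X W p Y0, partitionX X W p (fun ω => m0 (X ω))]
  congr 1
  apply Finset.sum_congr rfl
  intro x _
  rw [keyx x]
  have : wsum p (fun ω => m0 (X ω)) (fun ω => W ω = true ∧ X ω = x)
      = finPr p (fun ω => W ω = true ∧ X ω = x) * m0 x := by
    unfold wsum finPr
    rw [Finset.sum_mul]
    apply Finset.sum_congr rfl
    intro ω _
    by_cases h : W ω = true ∧ X ω = x
    · simp [h, h.2]
    · simp [h]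
  rw [this]
end

section
/- Let (Ω, P) be a finite probability space carrying random variables X : Ω → 𝒳 (𝒳 finite), a binary treatment W : Ω → {0,1}, and a potential outcome Y⁰ : Ω → ℝ. Define the propensity score e(x) = P(W = 1 | X = x) for x with P(X = x) > 0. Assume ignorability (Y⁰ conditionally independent of W given X) and one-sided overlap (e(x) < 1 for all x with P(X = x) > 0). If P(W = 1) > 0, then the counterfactual control mean of the treated is identified by odds-of-treatment weighting of the controls: E[Y⁰ · 1{W = 1}] = E[ (e(X) / (1 − e(X))) · Y⁰ · 1{W = 0} ]; equivalently, E[Y⁰ | W = 1] = E[ (e(X)/(1 − e(X))) · Y⁰ · 1{W = 0} ] / P(W = 1). -/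
open scoped Classical
open Finset

/-- Expectation `E[f]` on a finite space weighted by `p`. -/
noncomputable def finExp {Ω : Type*} [Fintype Ω] (p : Ω → ℝ) (f : Ω → ℝ) : ℝ :=
  ∑ ω : Ω, p ω * f ω

lemma sum_fiber {Ω α : Type*} [Fintype Ω] [DecidableEq α] (g : Ω → α) (f : Ω → ℝ) :
    ∑ ω : Ω, f ω = ∑ a ∈ Finset.univ.image g, ∑ ω : Ω, if g ω = a then f ω else 0 := by
  rw [Finset.sum_comm]
  refine Finset.sum_congr rfl fun ω _ => ?_
  rw [Finset.sum_ite_eq (Finset.univ.image g) (g ω) (fun _ => f ω)]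
  simp

lemma fiber_weight {Ω : Type*} [Fintype Ω] (p : Ω → ℝ) (Y0 : Ω → ℝ) (C : Ω → Prop) [DecidablePred C] :
    (∑ ω : Ω, if C ω then p ω * Y0 ω else 0)
      = ∑ y ∈ Finset.univ.image Y0, y * finPr p (fun ω => Y0 ω = y ∧ C ω) := by
  rw [sum_fiber Y0 (fun ω => if C ω then p ω * Y0 ω else 0)]
  refine Finset.sum_congr rfl fun y _ => ?_
  unfold finPr
  rw [Finset.mul_sum]
  refine Finset.sum_congr rfl fun ω _ => ?_
  by_cases h1 : Y0 ω = y <;> by_cases h2 : C ω <;> simp [h1, h2, mul_comm]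

/-- Under ignorability and one-sided overlap (`e(x) < 1`), the counterfactual control
mean of the treated is identified by odds-of-treatment weighting of the controls. -/
theorem identification_by_ipw {Ω 𝒳 : Type*} [Fintype Ω] [Fintype 𝒳]
    (p : Ω → ℝ) (hp0 : ∀ ω, 0 ≤ p ω) (hp1 : ∑ ω : Ω, p ω = 1)
    (X : Ω → 𝒳) (W : Ω → Bool) (Y0 : Ω → ℝ)
    (e : 𝒳 → ℝ)
    (he : ∀ x, 0 < finPr p (fun ω => X ω = x) →
      e x = finPr p (fun ω => W ω = true ∧ X ω = x) / finPr p (fun ω => X ω = x))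
    (hignore : ∀ x, 0 < finPr p (fun ω => X ω = x) → ∀ y : ℝ,
      finPr p (fun ω => W ω = true ∧ Y0 ω = y ∧ X ω = x) / finPr p (fun ω => X ω = x)
        = (finPr p (fun ω => W ω = true ∧ X ω = x) / finPr p (fun ω => X ω = x))
          * (finPr p (fun ω => Y0 ω = y ∧ X ω = x) / finPr p (fun ω => X ω = x)))
    (hoverlap : ∀ x, 0 < finPr p (fun ω => X ω = x) → e x < 1)
    (hW : 0 < finPr p (fun ω => W ω = true)) :
    finExp p (fun ω => Y0 ω * (if W ω = true then 1 else 0))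
      = finExp p (fun ω => (e (X ω) / (1 - e (X ω))) * Y0 ω * (if W ω = false then 1 else 0))
    ∧ finCondExp p Y0 (fun ω => W ω = true)
        = finExp p
            (fun ω => (e (X ω) / (1 - e (X ω))) * Y0 ω * (if W ω = false then 1 else 0))
          / finPr p (fun ω => W ω = true) := by
  classical
  have key : ∀ x : 𝒳, (∑ ω : Ω, if W ω = true ∧ X ω = x then p ω * Y0 ω else 0)
      = (e x / (1 - e x)) * ∑ ω : Ω, if W ω = false ∧ X ω = x then p ω * Y0 ω else 0 := by
    intro x
    by_cases hx : 0 < finPr p (fun ω => X ω = x)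
    · have hPne : finPr p (fun ω => X ω = x) ≠ 0 := ne_of_gt hx
      have hex := he x hx
      have h1e : (0:ℝ) < 1 - e x := by linarith [hoverlap x hx]
      have h1ne : (1 : ℝ) - e x ≠ 0 := ne_of_gt h1e
      -- per-y identities
      have hP1 : ∀ y : ℝ, finPr p (fun ω => Y0 ω = y ∧ W ω = true ∧ X ω = x)
          = e x * finPr p (fun ω => Y0 ω = y ∧ X ω = x) := by
        intro y
        have h := hignore x hx y
        rw [← hex] at h
        have hre : finPr p (fun ω => W ω = true ∧ Y0 ω = y ∧ X ω = x)
            = finPr p (fun ω => Y0 ω = y ∧ W ω = true ∧ X ω = x) :=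
          finPr_congr p (fun ω => by tauto)
        rw [hre] at h
        field_simp at h
        linarith [h]
      have hsplit : ∀ y : ℝ, finPr p (fun ω => Y0 ω = y ∧ X ω = x)
          = finPr p (fun ω => Y0 ω = y ∧ W ω = true ∧ X ω = x)
            + finPr p (fun ω => Y0 ω = y ∧ W ω = false ∧ X ω = x) := by
        intro y
        unfold finPr
        rw [← Finset.sum_add_distrib]
        refine Finset.sum_congr rfl fun ω _ => ?_
        cases hW' : W ω <;> by_cases hy : Y0 ω = y <;> by_cases hXx : X ω = x <;>
          simp [hW', hy, hXx]
      have hP0 : ∀ y : ℝ, finPr p (fun ω => Y0 ω = y ∧ W ω = false ∧ X ω = x)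
          = (1 - e x) * finPr p (fun ω => Y0 ω = y ∧ X ω = x) := by
        intro y
        have h1 := hP1 y
        have h2 := hsplit y
        nlinarith [h1, h2]
      rw [fiber_weight p Y0 (fun ω => W ω = true ∧ X ω = x),
          fiber_weight p Y0 (fun ω => W ω = false ∧ X ω = x), Finset.mul_sum]
      refine Finset.sum_congr rfl fun y _ => ?_
      rw [hP1 y, hP0 y]
      field_simp
    · have hzero : ∀ ω, X ω = x → p ω = 0 := by
        intro ω hXx
        have hnn : ∀ ω' ∈ Finset.univ, (0:ℝ) ≤ if X ω' = x then p ω' else 0 := by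
          intro ω' _; split_ifs <;> simp [hp0 ω']
        have h0 : finPr p (fun ω => X ω = x) = 0 := by
          have := Finset.sum_nonneg hnn
          have : (0:ℝ) ≤ finPr p (fun ω => X ω = x) := this
          linarith [lt_or_eq_of_le this, (not_lt.mp hx)]
        have := (Finset.sum_eq_zero_iff_of_nonneg hnn).mp h0 ω (Finset.mem_univ ω)
        simpa [hXx] using this
      have hA : (∑ ω : Ω, if W ω = true ∧ X ω = x then p ω * Y0 ω else 0) = 0 := by
        refine Finset.sum_eq_zero fun ω _ => ?_
        split_ifs with h
        · rw [hzero ω h.2]; ring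
        · rfl
      have hB : (∑ ω : Ω, if W ω = false ∧ X ω = x then p ω * Y0 ω else 0) = 0 := by
        refine Finset.sum_eq_zero fun ω _ => ?_
        split_ifs with h
        · rw [hzero ω h.2]; ring
        · rfl
      rw [hA, hB, mul_zero]
  have main : finExp p (fun ω => Y0 ω * (if W ω = true then 1 else 0))
      = finExp p (fun ω => (e (X ω) / (1 - e (X ω))) * Y0 ω * (if W ω = false then 1 else 0)) := by
    unfold finExp
    rw [sum_fiber X (fun ω => p ω * (Y0 ω * if W ω = true then 1 else 0)),
        sum_fiber X (fun ω => p ω * ((e (X ω) / (1 - e (X ω))) * Y0 ω * if W ω = false then 1 else 0))]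
    refine Finset.sum_congr rfl fun x _ => ?_
    have hL : (∑ ω : Ω, if X ω = x then p ω * (Y0 ω * if W ω = true then 1 else 0) else 0)
        = ∑ ω : Ω, if W ω = true ∧ X ω = x then p ω * Y0 ω else 0 := by
      refine Finset.sum_congr rfl fun ω _ => ?_
      by_cases h1 : X ω = x <;> cases h2 : W ω <;> simp [h1, h2]
    have hR : (∑ ω : Ω, if X ω = x then p ω * ((e (X ω) / (1 - e (X ω))) * Y0 ω * if W ω = false then 1 else 0) else 0)
        = (e x / (1 - e x)) * ∑ ω : Ω, if W ω = false ∧ X ω = x then p ω * Y0 ω else 0 := by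
      rw [Finset.mul_sum]
      refine Finset.sum_congr rfl fun ω _ => ?_
      by_cases h1 : X ω = x <;> cases h2 : W ω <;> simp [h1, h2] <;> ring
    rw [hL, hR, key x]
  refine ⟨main, ?_⟩
  have hce : finCondExp p Y0 (fun ω => W ω = true)
      = finExp p (fun ω => Y0 ω * (if W ω = true then 1 else 0)) / finPr p (fun ω => W ω = true) := by
    unfold finCondExp finExp
    congr 1
    refine Finset.sum_congr rfl fun ω _ => ?_
    cases h : W ω <;> simp [h]
  rw [hce, main]
end

section
/- (Dual characterization of partially pooled balancing weights.) Consider n units with binary treatment W_i ∈ {0,1}, stratum labels G_i ∈ {1,…,K}, covariate vectors φ_i ∈ ℝ^p, stratum treated counts n_{1g} = |{i : G_i = g, W_i = 1}|, and regularization parameters λ_g > 0. Define the primal problem over weights γ ∈ ℝ^n (on control units): minimize Σ_{g=1}^K [ (1/(2λ_g)) ‖Σ_{G_i = g, W_i = 0} γ_i φ_i − Σ_{G_i = g, W_i = 1} φ_i‖₂² + (1/2) Σ_{G_i = g, W_i = 0} γ_i² ] subject to exact global balance Σ_{W_i = 0} γ_i φ_i = Σ_{W_i = 1} φ_i, the fine-balance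 constraints Σ_{G_i = g, W_i = 0} γ_i = n_{1g} for each g, and nonnegativity γ_i ≥ 0. Define, for α_g ∈ ℝ and β_g ∈ ℝ^p, the balancing loss ℒ_g(α_g, β_g) = Σ_{G_i = g, W_i = 0} (1/2)[α_g + ⟨β_g, φ_i⟩]₊² − Σ_{G_i = g, W_i = 1} (α_g + ⟨β_g, φ_i⟩), and the dual objective D(α, β, μ_β) = Σ_{g=1}^K ℒ_g(α_g, β_g) + Σ_{g=1}^K (λ_g/2) ‖β_g − μ_β‖₂². If a feasible solution to the primal problem exists and (α̂, β̂₁,…,β̂_K, μ̂_β) minimizes D, then the weights defined by γ̂_i = [α̂_{G_i} + ⟨β̂_{G_i}, φ_i⟩]₊ for control units solve the primal problem. -/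
open scoped RealInnerProductSpace
open Finset

variable {ι : Type*} [Fintype ι] {p K : ℕ}

/-- Primal objective of the partially pooled approximate balancing weights problem:
for each stratum `g`, the scaled squared local covariate imbalance plus half the sum of
squared weights over the controls in `g`. -/
noncomputable def primalObj [DecidableEq (Fin K)] (W : ι → Bool) (G : ι → Fin K)
    (φ : ι → EuclideanSpace ℝ (Fin p)) (lam : Fin K → ℝ) (γ : ι → ℝ) : ℝ :=
  ∑ g : Fin K,
    ((1 / (2 * lam g)) *
        ‖(∑ i ∈ univ.filter fun i => G i = g ∧ W i = false, γ i • φ i)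
            - ∑ i ∈ univ.filter fun i => G i = g ∧ W i = true, φ i‖ ^ 2
      + (1 / 2) * ∑ i ∈ univ.filter fun i => G i = g ∧ W i = false, γ i ^ 2)

/-- Feasibility for the primal problem: exact global covariate balance, fine-balance
(the control weights in each stratum sum to the number of treated units `n_{1g}`), and
nonnegativity of the weights on control units. -/
def primalFeasible [DecidableEq (Fin K)] (W : ι → Bool) (G : ι → Fin K)
    (φ : ι → EuclideanSpace ℝ (Fin p)) (γ : ι → ℝ) : Prop :=
  ((∑ i ∈ univ.filter fun i => W i = false, γ i • φ i)
      = ∑ i ∈ univ.filter fun i => W i = true, φ i)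
    ∧ (∀ g : Fin K, (∑ i ∈ univ.filter fun i => G i = g ∧ W i = false, γ i)
        = ((univ.filter fun i => G i = g ∧ W i = true).card : ℝ))
    ∧ (∀ i, W i = false → 0 ≤ γ i)

/-- The balancing loss `ℒ_g(α_g, β_g)` for stratum `g`. -/
noncomputable def balancingLoss [DecidableEq (Fin K)] (W : ι → Bool) (G : ι → Fin K)
    (φ : ι → EuclideanSpace ℝ (Fin p)) (g : Fin K) (a : ℝ)
    (b : EuclideanSpace ℝ (Fin p)) : ℝ :=
  (∑ i ∈ univ.filter fun i => G i = g ∧ W i = false,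
      (1 / 2) * (max (a + ⟪b, φ i⟫) 0) ^ 2)
    - ∑ i ∈ univ.filter fun i => G i = g ∧ W i = true, (a + ⟪b, φ i⟫)

/-- The dual objective: sum of the stratum balancing losses plus squared-`L²` shrinkage
of the stratum coefficients `β_g` toward the global coefficient `μ_β`. -/
noncomputable def dualObj [DecidableEq (Fin K)] (W : ι → Bool) (G : ι → Fin K)
    (φ : ι → EuclideanSpace ℝ (Fin p)) (lam : Fin K → ℝ) (α : Fin K → ℝ)
    (β : Fin K → EuclideanSpace ℝ (Fin p)) (μβ : EuclideanSpace ℝ (Fin p)) : ℝ :=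
  (∑ g : Fin K, balancingLoss W G φ g (α g) (β g))
    + ∑ g : Fin K, (lam g / 2) * ‖β g - μβ‖ ^ 2


lemma lin_zero (L Q : ℝ) (hQ : 0 ≤ Q) (h : ∀ t : ℝ, 0 ≤ t * L + t ^ 2 * Q) : L = 0 := by
  have key : ∀ ε : ℝ, 0 < ε → |L| ≤ ε := by
    intro ε hε
    have hQ1 : (0:ℝ) < Q + 1 := by linarith
    set t := ε / (Q + 1) with ht
    have htpos : 0 < t := div_pos hε hQ1
    have htQ : t * (Q + 1) = ε := div_mul_cancel₀ ε hQ1.ne'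
    have h1 := h t
    have h2 := h (-t)
    rw [abs_le]
    constructor <;> nlinarith [mul_pos htpos htpos, htpos]
  have h0 : |L| ≤ 0 := le_of_forall_pos_le_add (by intro ε hε; simpa using key ε hε)
  exact abs_eq_zero.mp (le_antisymm h0 (abs_nonneg L))

lemma half_sq_pos_part_le (x h : ℝ) :
    (1/2) * (max (x + h) 0) ^ 2 ≤ (1/2) * (max x 0) ^ 2 + (max x 0) * h + (1/2) * h ^ 2 := by
  rcases le_or_gt (x + h) 0 with h1 | h1
  · rw [max_eq_right h1]
    nlinarith [le_max_left x 0, le_max_right x 0, sq_nonneg (max x 0 + h)]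
  · rw [max_eq_left h1.le]
    rcases le_or_gt x 0 with h2 | h2
    · rw [max_eq_right h2]; nlinarith
    · rw [max_eq_left h2.le]; nlinarith

lemma max_mul_max_neg (t : ℝ) : max t 0 * max (-t) 0 = 0 := by
  rcases le_total t 0 with h | h
  · rw [max_eq_right h]; ring
  · rw [max_eq_right (by linarith : -t ≤ 0)]; ring

lemma max_sub_self (t : ℝ) : max t 0 - t = max (-t) 0 := by
  rcases le_total t 0 with h | h
  · rw [max_eq_right h, max_eq_left (by linarith)]; ring
  · rw [max_eq_left h, max_eq_right (by linarith)]; ring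

lemma sum_update_sub {κ : Type*} [Fintype κ] [DecidableEq κ] {M N : Type*} [AddCommGroup N]
    (F : κ → M → N) (f : κ → M) (g : κ) (v : M) :
    ((∑ k, F k (Function.update f g v k)) - ∑ k, F k (f k)) = F g v - F g (f g) := by
  rw [← Finset.sum_sub_distrib, Finset.sum_eq_single g]
  · rw [Function.update_self]
  · intro k _ hk; rw [Function.update_of_ne hk, sub_self]
  · intro h; exact absurd (mem_univ g) h

lemma factA [DecidableEq (Fin K)] (W : ι → Bool) (G : ι → Fin K)
    (φ : ι → EuclideanSpace ℝ (Fin p)) (lam : Fin K → ℝ)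
    (αh : Fin K → ℝ) (βh : Fin K → EuclideanSpace ℝ (Fin p)) (μh : EuclideanSpace ℝ (Fin p))
    (hmin : ∀ (α : Fin K → ℝ) (β : Fin K → EuclideanSpace ℝ (Fin p))
        (μβ : EuclideanSpace ℝ (Fin p)),
        dualObj W G φ lam αh βh μh ≤ dualObj W G φ lam α β μβ) (g : Fin K) :
    (∑ i ∈ univ.filter fun i => G i = g ∧ W i = false, max (αh g + ⟪βh g, φ i⟫) 0)
      = ((univ.filter fun i => G i = g ∧ W i = true).card : ℝ) := by
  have key : ((∑ i ∈ univ.filter fun i => G i = g ∧ W i = false, max (αh g + ⟪βh g, φ i⟫) 0)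
      - ((univ.filter fun i => G i = g ∧ W i = true).card : ℝ)) = 0 := by
    apply lin_zero _ (((univ.filter fun i => G i = g ∧ W i = false).card : ℝ) * (1/2))
      (by positivity)
    intro t
    have h1 := hmin (Function.update αh g (αh g + t)) βh μh
    have h3 := sum_update_sub (fun k (a : ℝ) => balancingLoss W G φ k a (βh k)) αh g (αh g + t)
    have h2 : dualObj W G φ lam (Function.update αh g (αh g + t)) βh μh
        - dualObj W G φ lam αh βh μh
        = balancingLoss W G φ g (αh g + t) (βh g) - balancingLoss W G φ g (αh g) (βh g) := by
      simp only [dualObj]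
      linarith [h3]
    have h4 : balancingLoss W G φ g (αh g + t) (βh g) - balancingLoss W G φ g (αh g) (βh g)
        ≤ t * ((∑ i ∈ univ.filter fun i => G i = g ∧ W i = false, max (αh g + ⟪βh g, φ i⟫) 0)
              - ((univ.filter fun i => G i = g ∧ W i = true).card : ℝ))
          + t ^ 2 * (((univ.filter fun i => G i = g ∧ W i = false).card : ℝ) * (1/2)) := by
      simp only [balancingLoss]
      have e1 : (∑ i ∈ univ.filter fun i => G i = g ∧ W i = true, ((αh g + t) + ⟪βh g, φ i⟫))
          = (∑ i ∈ univ.filter fun i => G i = g ∧ W i = true, (αh g + ⟪βh g, φ i⟫))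
            + ((univ.filter fun i => G i = g ∧ W i = true).card : ℝ) * t := by
        rw [Finset.sum_congr rfl (fun i _ => by ring :
          ∀ i ∈ univ.filter fun i => G i = g ∧ W i = true,
            ((αh g + t) + ⟪βh g, φ i⟫) = (αh g + ⟪βh g, φ i⟫) + t)]
        rw [Finset.sum_add_distrib, Finset.sum_const, nsmul_eq_mul]
      have e2 : (∑ i ∈ univ.filter fun i => G i = g ∧ W i = false,
            (1/2) * (max ((αh g + t) + ⟪βh g, φ i⟫) 0) ^ 2)
          ≤ (∑ i ∈ univ.filter fun i => G i = g ∧ W i = false,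
              (1/2) * (max (αh g + ⟪βh g, φ i⟫) 0) ^ 2)
            + t * (∑ i ∈ univ.filter fun i => G i = g ∧ W i = false, max (αh g + ⟪βh g, φ i⟫) 0)
            + t ^ 2 * (((univ.filter fun i => G i = g ∧ W i = false).card : ℝ) * (1/2)) := by
        have hb : ∀ i ∈ univ.filter fun i => G i = g ∧ W i = false,
            (1/2) * (max ((αh g + t) + ⟪βh g, φ i⟫) 0) ^ 2
              ≤ (1/2) * (max (αh g + ⟪βh g, φ i⟫) 0) ^ 2
                + (max (αh g + ⟪βh g, φ i⟫) 0) * t + (1/2) * t ^ 2 := by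
          intro i _
          have := half_sq_pos_part_le (αh g + ⟪βh g, φ i⟫) t
          have hx : (αh g + t) + ⟪βh g, φ i⟫ = (αh g + ⟪βh g, φ i⟫) + t := by ring
          rw [hx]
          linarith
        calc (∑ i ∈ univ.filter fun i => G i = g ∧ W i = false,
            (1/2) * (max ((αh g + t) + ⟪βh g, φ i⟫) 0) ^ 2)
            ≤ ∑ i ∈ univ.filter fun i => G i = g ∧ W i = false,
              ((1/2) * (max (αh g + ⟪βh g, φ i⟫) 0) ^ 2
                + (max (αh g + ⟪βh g, φ i⟫) 0) * t + (1/2) * t ^ 2) :=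
              Finset.sum_le_sum hb
          _ = _ := by
              rw [Finset.sum_add_distrib, Finset.sum_add_distrib, Finset.sum_const,
                nsmul_eq_mul, ← Finset.sum_mul]
              ring
      rw [e1]
      linarith [e2]
    nlinarith [h1, h2, h4]
  linarith [key]


lemma factB [DecidableEq (Fin K)] (W : ι → Bool) (G : ι → Fin K)
    (φ : ι → EuclideanSpace ℝ (Fin p)) (lam : Fin K → ℝ) (hlam : ∀ g, 0 < lam g)
    (αh : Fin K → ℝ) (βh : Fin K → EuclideanSpace ℝ (Fin p)) (μh : EuclideanSpace ℝ (Fin p))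
    (hmin : ∀ (α : Fin K → ℝ) (β : Fin K → EuclideanSpace ℝ (Fin p))
        (μβ : EuclideanSpace ℝ (Fin p)),
        dualObj W G φ lam αh βh μh ≤ dualObj W G φ lam α β μβ) (g : Fin K) :
    ((∑ i ∈ univ.filter fun i => G i = g ∧ W i = false, (max (αh g + ⟪βh g, φ i⟫) 0) • φ i)
        - ∑ i ∈ univ.filter fun i => G i = g ∧ W i = true, φ i)
      + lam g • (βh g - μh) = 0 := by
  set v : EuclideanSpace ℝ (Fin p) :=
    ((∑ i ∈ univ.filter fun i => G i = g ∧ W i = false, (max (αh g + ⟪βh g, φ i⟫) 0) • φ i)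
        - ∑ i ∈ univ.filter fun i => G i = g ∧ W i = true, φ i)
      + lam g • (βh g - μh) with hv
  have hz : ∀ b : EuclideanSpace ℝ (Fin p),
      ((∑ i ∈ univ.filter fun i => G i = g ∧ W i = false,
          (max (αh g + ⟪βh g, φ i⟫) 0) * ⟪b, φ i⟫)
        - ∑ i ∈ univ.filter fun i => G i = g ∧ W i = true, ⟪b, φ i⟫)
      + lam g * ⟪βh g - μh, b⟫ = 0 := by
    intro b
    apply lin_zero _ ((∑ i ∈ univ.filter fun i => G i = g ∧ W i = false,
        (1/2) * ⟪b, φ i⟫ ^ 2) + (lam g / 2) * ‖b‖ ^ 2)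
      (add_nonneg (Finset.sum_nonneg fun i _ => by positivity)
        (mul_nonneg (by linarith [hlam g]) (by positivity)))
    intro t
    have h1 := hmin αh (Function.update βh g (βh g + t • b)) μh
    have h3 := sum_update_sub (fun k (b' : EuclideanSpace ℝ (Fin p)) =>
      balancingLoss W G φ k (αh k) b') βh g (βh g + t • b)
    have h5 := sum_update_sub (fun k (b' : EuclideanSpace ℝ (Fin p)) =>
      (lam k / 2) * ‖b' - μh‖ ^ 2) βh g (βh g + t • b)
    have h2 : dualObj W G φ lam αh (Function.update βh g (βh g + t • b)) μh
        - dualObj W G φ lam αh βh μh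
        = (balancingLoss W G φ g (αh g) (βh g + t • b)
            - balancingLoss W G φ g (αh g) (βh g))
          + ((lam g / 2) * ‖(βh g + t • b) - μh‖ ^ 2 - (lam g / 2) * ‖βh g - μh‖ ^ 2) := by
      simp only [dualObj]
      linarith [h3, h5]
    have hshr : (lam g / 2) * ‖(βh g + t • b) - μh‖ ^ 2 - (lam g / 2) * ‖βh g - μh‖ ^ 2
        = t * (lam g * ⟪βh g - μh, b⟫) + t ^ 2 * ((lam g / 2) * ‖b‖ ^ 2) := by
      have hrw : (βh g + t • b) - μh = (βh g - μh) + t • b := by abel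
      rw [hrw, norm_add_sq_real, real_inner_smul_right, norm_smul, mul_pow,
        Real.norm_eq_abs, sq_abs]
      ring
    have h4 : balancingLoss W G φ g (αh g) (βh g + t • b)
          - balancingLoss W G φ g (αh g) (βh g)
        ≤ t * ((∑ i ∈ univ.filter fun i => G i = g ∧ W i = false,
                (max (αh g + ⟪βh g, φ i⟫) 0) * ⟪b, φ i⟫)
              - ∑ i ∈ univ.filter fun i => G i = g ∧ W i = true, ⟪b, φ i⟫)
          + t ^ 2 * (∑ i ∈ univ.filter fun i => G i = g ∧ W i = false,
                (1/2) * ⟪b, φ i⟫ ^ 2) := by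
      simp only [balancingLoss]
      have hip : ∀ i, ⟪βh g + t • b, φ i⟫ = ⟪βh g, φ i⟫ + t * ⟪b, φ i⟫ := by
        intro i; rw [inner_add_left, real_inner_smul_left]
      have e1 : (∑ i ∈ univ.filter fun i => G i = g ∧ W i = true,
            (αh g + ⟪βh g + t • b, φ i⟫))
          = (∑ i ∈ univ.filter fun i => G i = g ∧ W i = true, (αh g + ⟪βh g, φ i⟫))
            + t * ∑ i ∈ univ.filter fun i => G i = g ∧ W i = true, ⟪b, φ i⟫ := by
        rw [Finset.mul_sum, ← Finset.sum_add_distrib]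
        exact Finset.sum_congr rfl (fun i _ => by rw [hip i]; ring)
      have e2 : (∑ i ∈ univ.filter fun i => G i = g ∧ W i = false,
            (1/2) * (max (αh g + ⟪βh g + t • b, φ i⟫) 0) ^ 2)
          ≤ (∑ i ∈ univ.filter fun i => G i = g ∧ W i = false,
              (1/2) * (max (αh g + ⟪βh g, φ i⟫) 0) ^ 2)
            + t * (∑ i ∈ univ.filter fun i => G i = g ∧ W i = false,
                (max (αh g + ⟪βh g, φ i⟫) 0) * ⟪b, φ i⟫)
            + t ^ 2 * (∑ i ∈ univ.filter fun i => G i = g ∧ W i = false,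
                (1/2) * ⟪b, φ i⟫ ^ 2) := by
        rw [Finset.mul_sum, Finset.mul_sum, ← Finset.sum_add_distrib, ← Finset.sum_add_distrib]
        apply Finset.sum_le_sum
        intro i _
        have := half_sq_pos_part_le (αh g + ⟪βh g, φ i⟫) (t * ⟪b, φ i⟫)
        have hx : αh g + ⟪βh g + t • b, φ i⟫ = (αh g + ⟪βh g, φ i⟫) + t * ⟪b, φ i⟫ := by
          rw [hip i]; ring
        rw [hx]
        nlinarith [this]
      rw [e1]
      linarith [e2]
    nlinarith [h1, h2, hshr, h4]
  have hvz : ⟪v, v⟫ = 0 := by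
    have expand : ∀ b : EuclideanSpace ℝ (Fin p), ⟪v, b⟫
        = ((∑ i ∈ univ.filter fun i => G i = g ∧ W i = false,
            (max (αh g + ⟪βh g, φ i⟫) 0) * ⟪b, φ i⟫)
          - ∑ i ∈ univ.filter fun i => G i = g ∧ W i = true, ⟪b, φ i⟫)
        + lam g * ⟪βh g - μh, b⟫ := by
      intro b
      rw [hv, inner_add_left, inner_sub_left, sum_inner, sum_inner, real_inner_smul_left]
      congr 2
      · exact Finset.sum_congr rfl (fun i _ => by
          rw [real_inner_smul_left, real_inner_comm b (φ i)])
      · exact Finset.sum_congr rfl (fun i _ => real_inner_comm b (φ i))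
    rw [expand v, hz v]
  have : v = 0 := inner_self_eq_zero.mp hvz
  exact this

lemma factC [DecidableEq (Fin K)] (W : ι → Bool) (G : ι → Fin K)
    (φ : ι → EuclideanSpace ℝ (Fin p)) (lam : Fin K → ℝ) (hlam : ∀ g, 0 < lam g)
    (αh : Fin K → ℝ) (βh : Fin K → EuclideanSpace ℝ (Fin p)) (μh : EuclideanSpace ℝ (Fin p))
    (hmin : ∀ (α : Fin K → ℝ) (β : Fin K → EuclideanSpace ℝ (Fin p))
        (μβ : EuclideanSpace ℝ (Fin p)),
        dualObj W G φ lam αh βh μh ≤ dualObj W G φ lam α β μβ) :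
    (∑ g : Fin K, lam g • (βh g - μh)) = 0 := by
  set v : EuclideanSpace ℝ (Fin p) := ∑ g : Fin K, lam g • (βh g - μh) with hv
  have hz : ∀ m : EuclideanSpace ℝ (Fin p),
      (∑ g : Fin K, lam g * ⟪βh g - μh, m⟫) = 0 := by
    intro m
    have key : -(∑ g : Fin K, lam g * ⟪βh g - μh, m⟫) = 0 := by
      apply lin_zero _ ((∑ g : Fin K, lam g / 2) * ‖m‖ ^ 2)
        (mul_nonneg (Finset.sum_nonneg fun g _ => by linarith [hlam g]) (by positivity))
      intro t
      have h1 := hmin αh βh (μh + t • m)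
      have h2 : dualObj W G φ lam αh βh (μh + t • m) - dualObj W G φ lam αh βh μh
          = t * (-(∑ g : Fin K, lam g * ⟪βh g - μh, m⟫))
            + t ^ 2 * ((∑ g : Fin K, lam g / 2) * ‖m‖ ^ 2) := by
        simp only [dualObj, add_sub_add_left_eq_sub, ← Finset.sum_sub_distrib]
        have : ∀ g : Fin K, (lam g / 2) * ‖βh g - (μh + t • m)‖ ^ 2
            - (lam g / 2) * ‖βh g - μh‖ ^ 2
            = t * (-(lam g * ⟪βh g - μh, m⟫)) + t ^ 2 * ((lam g / 2) * ‖m‖ ^ 2) := by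
          intro g
          have hrw : βh g - (μh + t • m) = (βh g - μh) - t • m := by abel
          rw [hrw, norm_sub_sq_real, real_inner_smul_right, norm_smul, mul_pow,
            Real.norm_eq_abs, sq_abs]
          ring
        rw [Finset.sum_congr rfl fun g _ => this g]
        rw [Finset.sum_add_distrib, ← Finset.mul_sum, ← Finset.mul_sum, ← Finset.sum_mul,
          Finset.sum_neg_distrib]
      linarith [h1, h2.symm.le]
    linarith [key]
  have hvz : ⟪v, v⟫ = 0 := by
    have expand : ⟪v, v⟫ = ∑ g : Fin K, lam g * ⟪βh g - μh, v⟫ := by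
      rw [hv, sum_inner]
      exact Finset.sum_congr rfl fun g _ => real_inner_smul_left _ _ _
    rw [expand, hz v]
  exact inner_self_eq_zero.mp hvz

lemma sum_partition [DecidableEq (Fin K)] (W : ι → Bool) (G : ι → Fin K) (b : Bool)
    {M : Type*} [AddCommMonoid M] (f : ι → M) :
    (∑ i ∈ univ.filter fun i => W i = b, f i)
      = ∑ g : Fin K, ∑ i ∈ univ.filter fun i => G i = g ∧ W i = b, f i := by
  rw [← Finset.sum_fiberwise (univ.filter fun i => W i = b) G f]
  apply Finset.sum_congr rfl
  intro g _
  apply Finset.sum_congr _ (fun _ _ => rfl)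
  rw [Finset.filter_filter]
  apply Finset.filter_congr
  intro i _
  simp [and_comm]

lemma stratum_ineq [DecidableEq (Fin K)] (W : ι → Bool) (G : ι → Fin K)
    (φ : ι → EuclideanSpace ℝ (Fin p)) (lam : Fin K → ℝ) (hlam : ∀ g, 0 < lam g)
    (αh : Fin K → ℝ) (βh : Fin K → EuclideanSpace ℝ (Fin p)) (μh : EuclideanSpace ℝ (Fin p))
    (g : Fin K) (γ : ι → ℝ)
    (hB : ((∑ i ∈ univ.filter fun i => G i = g ∧ W i = false,
          (max (αh g + ⟪βh g, φ i⟫) 0) • φ i)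
        - ∑ i ∈ univ.filter fun i => G i = g ∧ W i = true, φ i)
      = -(lam g • (βh g - μh))) :
    (1 / (2 * lam g)) * ‖(∑ i ∈ univ.filter fun i => G i = g ∧ W i = false,
          (max (αh g + ⟪βh g, φ i⟫) 0) • φ i)
        - ∑ i ∈ univ.filter fun i => G i = g ∧ W i = true, φ i‖ ^ 2
      + (1/2) * (∑ i ∈ univ.filter fun i => G i = g ∧ W i = false,
          (max (αh g + ⟪βh g, φ i⟫) 0) ^ 2)
      + (∑ i ∈ univ.filter fun i => G i = g ∧ W i = false,
          (γ i - max (αh g + ⟪βh g, φ i⟫) 0)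
            * (⟪μh, φ i⟫ + αh g + max (-(αh g + ⟪βh g, φ i⟫)) 0))
    ≤ (1 / (2 * lam g)) * ‖(∑ i ∈ univ.filter fun i => G i = g ∧ W i = false, γ i • φ i)
        - ∑ i ∈ univ.filter fun i => G i = g ∧ W i = true, φ i‖ ^ 2
      + (1/2) * ∑ i ∈ univ.filter fun i => G i = g ∧ W i = false, γ i ^ 2 := by
  classical
  have hl : (0:ℝ) < lam g := hlam g
  set C : Finset ι := univ.filter fun i => G i = g ∧ W i = false with hC
  set m : ι → ℝ := fun i => max (αh g + ⟪βh g, φ i⟫) 0 with hm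
  set Tv : EuclideanSpace ℝ (Fin p) :=
    ∑ i ∈ univ.filter fun i => G i = g ∧ W i = true, φ i with hT
  set δ : EuclideanSpace ℝ (Fin p) := (∑ i ∈ C, m i • φ i) - Tv with hδ
  set d : EuclideanSpace ℝ (Fin p) := ∑ i ∈ C, (γ i - m i) • φ i with hd
  have hsplit : (∑ i ∈ C, γ i • φ i) = (∑ i ∈ C, m i • φ i) + d := by
    rw [hd, ← Finset.sum_add_distrib]
    apply Finset.sum_congr rfl
    intro i _
    rw [← add_smul]
    congr 1
    ring
  have hsum : (∑ i ∈ C, γ i • φ i) - Tv = δ + d := by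
    rw [hsplit, hδ]; abel
  have hδu : δ = lam g • (μh - βh g) := by
    rw [hB, ← smul_neg, neg_sub]
  have hip : ⟪δ, d⟫ = lam g * (∑ i ∈ C, (γ i - m i) * ⟪μh - βh g, φ i⟫) := by
    rw [hδu, real_inner_smul_left]
    congr 1
    rw [hd, inner_sum]
    exact Finset.sum_congr rfl fun i _ => real_inner_smul_right _ _ _
  have hip2 : (1/(2*lam g)) * (2 * ⟪δ, d⟫)
      = ∑ i ∈ C, (γ i - m i) * ⟪μh - βh g, φ i⟫ := by
    rw [hip]; field_simp
  have h1 : (∑ i ∈ C, (γ i - m i) * (⟪μh, φ i⟫ + αh g + max (-(αh g + ⟪βh g, φ i⟫)) 0))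
      = (∑ i ∈ C, (γ i - m i) * ⟪μh - βh g, φ i⟫) + ∑ i ∈ C, m i * (γ i - m i) := by
    rw [← Finset.sum_add_distrib]
    apply Finset.sum_congr rfl
    intro i _
    have hms := max_sub_self (αh g + ⟪βh g, φ i⟫)
    rw [inner_sub_left]
    have hmi : m i = max (αh g + ⟪βh g, φ i⟫) 0 := rfl
    rw [hmi]
    linear_combination (max (αh g + ⟪βh g, φ i⟫) 0 - γ i) * hms
  have h2 : (∑ i ∈ C, (m i ^ 2 + 2 * (m i * (γ i - m i)))) ≤ ∑ i ∈ C, γ i ^ 2 := by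
    apply Finset.sum_le_sum
    intro i _
    nlinarith [sq_nonneg (γ i - m i)]
  have h2' : (∑ i ∈ C, m i ^ 2) + 2 * (∑ i ∈ C, m i * (γ i - m i)) ≤ ∑ i ∈ C, γ i ^ 2 := by
    rw [Finset.mul_sum] at *
    rw [← Finset.sum_add_distrib] at *
    exact h2
  have hpos : 0 ≤ (1/(2*lam g)) * ‖d‖ ^ 2 :=
    mul_nonneg (le_of_lt (one_div_pos.mpr (by linarith))) (by positivity)
  have hRHS : (1/(2*lam g)) * ‖δ + d‖ ^ 2
      = (1/(2*lam g)) * ‖δ‖ ^ 2 + (∑ i ∈ C, (γ i - m i) * ⟪μh - βh g, φ i⟫)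
        + (1/(2*lam g)) * ‖d‖ ^ 2 := by
    rw [norm_add_sq_real, mul_add, mul_add, hip2]
  rw [hsum, hRHS]
  linarith [h1, h2', hpos]

/-- Dual characterization of the partially pooled balancing weights: if the primal
problem is feasible and `(α̂, β̂, μ̂_β)` minimizes the dual objective, then the weights
`γ̂_i = [α̂_{G_i} + ⟪β̂_{G_i}, φ_i⟫]₊` are feasible and minimize the primal objective. -/
theorem dual_solves_primal [DecidableEq (Fin K)] (W : ι → Bool) (G : ι → Fin K)
    (φ : ι → EuclideanSpace ℝ (Fin p)) (lam : Fin K → ℝ) (hlam : ∀ g, 0 < lam g)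
    (hfeas : ∃ γ : ι → ℝ, primalFeasible W G φ γ)
    (αh : Fin K → ℝ) (βh : Fin K → EuclideanSpace ℝ (Fin p))
    (μh : EuclideanSpace ℝ (Fin p))
    (hmin : ∀ (α : Fin K → ℝ) (β : Fin K → EuclideanSpace ℝ (Fin p))
        (μβ : EuclideanSpace ℝ (Fin p)),
        dualObj W G φ lam αh βh μh ≤ dualObj W G φ lam α β μβ) :
    primalFeasible W G φ (fun i => max (αh (G i) + ⟪βh (G i), φ i⟫) 0)
      ∧ ∀ γ : ι → ℝ, primalFeasible W G φ γ →
          primalObj W G φ lam (fun i => max (αh (G i) + ⟪βh (G i), φ i⟫) 0)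
            ≤ primalObj W G φ lam γ := by
  classical
  have hA : ∀ g : Fin K, (∑ i ∈ univ.filter fun i => G i = g ∧ W i = false,
        max (αh g + ⟪βh g, φ i⟫) 0)
      = ((univ.filter fun i => G i = g ∧ W i = true).card : ℝ) :=
    fun g => factA W G φ lam αh βh μh hmin g
  have hB : ∀ g : Fin K, ((∑ i ∈ univ.filter fun i => G i = g ∧ W i = false,
        (max (αh g + ⟪βh g, φ i⟫) 0) • φ i)
      - ∑ i ∈ univ.filter fun i => G i = g ∧ W i = true, φ i)
      = -(lam g • (βh g - μh)) :=
    fun g => eq_neg_of_add_eq_zero_left (factB W G φ lam hlam αh βh μh hmin g)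
  have hC := factC W G φ lam hlam αh βh μh hmin
  have hmem : ∀ (g : Fin K) i, i ∈ (univ.filter fun i => G i = g ∧ W i = false) → G i = g :=
    fun g i hi => (Finset.mem_filter.mp hi).2.1
  have hcv1 : ∀ g : Fin K, (∑ i ∈ univ.filter fun i => G i = g ∧ W i = false,
        max (αh (G i) + ⟪βh (G i), φ i⟫) 0)
      = ∑ i ∈ univ.filter fun i => G i = g ∧ W i = false, max (αh g + ⟪βh g, φ i⟫) 0 :=
    fun g => Finset.sum_congr rfl fun i hi => by rw [hmem g i hi]
  have hcv2 : ∀ g : Fin K, (∑ i ∈ univ.filter fun i => G i = g ∧ W i = false,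
        (max (αh (G i) + ⟪βh (G i), φ i⟫) 0) • φ i)
      = ∑ i ∈ univ.filter fun i => G i = g ∧ W i = false, (max (αh g + ⟪βh g, φ i⟫) 0) • φ i :=
    fun g => Finset.sum_congr rfl fun i hi => by rw [hmem g i hi]
  have hcv3 : ∀ g : Fin K, (∑ i ∈ univ.filter fun i => G i = g ∧ W i = false,
        (max (αh (G i) + ⟪βh (G i), φ i⟫) 0) ^ 2)
      = ∑ i ∈ univ.filter fun i => G i = g ∧ W i = false, (max (αh g + ⟪βh g, φ i⟫) 0) ^ 2 :=
    fun g => Finset.sum_congr rfl fun i hi => by rw [hmem g i hi]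
  have hglob : (∑ i ∈ univ.filter fun i => W i = false,
        (max (αh (G i) + ⟪βh (G i), φ i⟫) 0) • φ i)
      = ∑ i ∈ univ.filter fun i => W i = true, φ i := by
    rw [sum_partition W G false (fun i => (max (αh (G i) + ⟪βh (G i), φ i⟫) 0) • φ i),
      sum_partition W G true φ, ← sub_eq_zero, ← Finset.sum_sub_distrib]
    have hterm : ∀ g ∈ (univ : Finset (Fin K)),
        ((∑ i ∈ univ.filter fun i => G i = g ∧ W i = false,
            (max (αh (G i) + ⟪βh (G i), φ i⟫) 0) • φ i)
          - ∑ i ∈ univ.filter fun i => G i = g ∧ W i = true, φ i)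
        = -(lam g • (βh g - μh)) := fun g _ => by rw [hcv2 g]; exact hB g
    rw [Finset.sum_congr rfl hterm, Finset.sum_neg_distrib, hC, neg_zero]
  have hfine : ∀ g : Fin K, (∑ i ∈ univ.filter fun i => G i = g ∧ W i = false,
        max (αh (G i) + ⟪βh (G i), φ i⟫) 0)
      = ((univ.filter fun i => G i = g ∧ W i = true).card : ℝ) :=
    fun g => by rw [hcv1 g]; exact hA g
  have hfeasγh : primalFeasible W G φ (fun i => max (αh (G i) + ⟪βh (G i), φ i⟫) 0) := by
    refine ⟨?_, ?_, fun i _ => le_max_right _ _⟩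
    · beta_reduce; exact hglob
    · intro g; beta_reduce; exact hfine g
  refine ⟨hfeasγh, ?_⟩
  intro γ hγ
  obtain ⟨hγglob, hγfine, hγpos⟩ := hγ
  simp only [primalObj]
  beta_reduce
  set R : Fin K → ℝ := fun g => ∑ i ∈ univ.filter fun i => G i = g ∧ W i = false,
    (γ i - max (αh g + ⟪βh g, φ i⟫) 0)
      * (⟪μh, φ i⟫ + αh g + max (-(αh g + ⟪βh g, φ i⟫)) 0) with hR
  have hkey : ∀ g ∈ (univ : Finset (Fin K)),
      ((1 / (2 * lam g)) *
          ‖(∑ i ∈ univ.filter fun i => G i = g ∧ W i = false,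
              (max (αh (G i) + ⟪βh (G i), φ i⟫) 0) • φ i)
            - ∑ i ∈ univ.filter fun i => G i = g ∧ W i = true, φ i‖ ^ 2
        + (1 / 2) * ∑ i ∈ univ.filter fun i => G i = g ∧ W i = false,
            (max (αh (G i) + ⟪βh (G i), φ i⟫) 0) ^ 2)
        + R g
      ≤ (1 / (2 * lam g)) *
          ‖(∑ i ∈ univ.filter fun i => G i = g ∧ W i = false, γ i • φ i)
            - ∑ i ∈ univ.filter fun i => G i = g ∧ W i = true, φ i‖ ^ 2
        + (1 / 2) * ∑ i ∈ univ.filter fun i => G i = g ∧ W i = false, γ i ^ 2 := by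
    intro g _
    rw [hcv2 g, hcv3 g]
    have hst := stratum_ineq W G φ lam hlam αh βh μh g γ (hB g)
    simp only [hR]
    linarith [hst]
  have hRsplit : ∀ g : Fin K, R g
      = (∑ i ∈ univ.filter fun i => G i = g ∧ W i = false,
          (γ i - max (αh (G i) + ⟪βh (G i), φ i⟫) 0) * ⟪μh, φ i⟫)
        + αh g * ((∑ i ∈ univ.filter fun i => G i = g ∧ W i = false, γ i)
            - ∑ i ∈ univ.filter fun i => G i = g ∧ W i = false,
                max (αh (G i) + ⟪βh (G i), φ i⟫) 0)
        + ∑ i ∈ univ.filter fun i => G i = g ∧ W i = false,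
            (γ i - max (αh g + ⟪βh g, φ i⟫) 0) * max (-(αh g + ⟪βh g, φ i⟫)) 0 := by
    intro g
    simp only [hR]
    have e0 : ∀ i ∈ (univ.filter fun i => G i = g ∧ W i = false),
        (γ i - max (αh g + ⟪βh g, φ i⟫) 0)
          * (⟪μh, φ i⟫ + αh g + max (-(αh g + ⟪βh g, φ i⟫)) 0)
        = (γ i - max (αh (G i) + ⟪βh (G i), φ i⟫) 0) * ⟪μh, φ i⟫
          + αh g * (γ i - max (αh (G i) + ⟪βh (G i), φ i⟫) 0)
          + (γ i - max (αh g + ⟪βh g, φ i⟫) 0) * max (-(αh g + ⟪βh g, φ i⟫)) 0 := by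
      intro i hi
      rw [hmem g i hi]
      ring
    rw [Finset.sum_congr rfl e0, Finset.sum_add_distrib, Finset.sum_add_distrib,
      ← Finset.mul_sum, Finset.sum_sub_distrib]
  have hRnonneg : 0 ≤ ∑ g : Fin K, R g := by
    rw [Finset.sum_congr rfl fun g _ => hRsplit g, Finset.sum_add_distrib,
      Finset.sum_add_distrib]
    have hp1 : (∑ g : Fin K, ∑ i ∈ univ.filter fun i => G i = g ∧ W i = false,
        (γ i - max (αh (G i) + ⟪βh (G i), φ i⟫) 0) * ⟪μh, φ i⟫) = 0 := by
      rw [← sum_partition W G false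
        (fun i => (γ i - max (αh (G i) + ⟪βh (G i), φ i⟫) 0) * ⟪μh, φ i⟫)]
      have e1 : ∀ ψ : ι → ℝ,
          ((∑ i ∈ univ.filter fun i => W i = false, ψ i • φ i)
            = ∑ i ∈ univ.filter fun i => W i = true, φ i) →
          (∑ i ∈ univ.filter fun i => W i = false, ψ i * ⟪μh, φ i⟫)
            = ⟪μh, ∑ i ∈ univ.filter fun i => W i = true, φ i⟫ := by
        intro ψ hψ
        rw [← hψ, inner_sum]
        exact Finset.sum_congr rfl fun i _ => (real_inner_smul_right _ _ _).symm
      have e2 := e1 γ hγglob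
      have e3 := e1 (fun i => max (αh (G i) + ⟪βh (G i), φ i⟫) 0) hglob
      have esplit : (∑ i ∈ univ.filter fun i => W i = false,
          (γ i - max (αh (G i) + ⟪βh (G i), φ i⟫) 0) * ⟪μh, φ i⟫)
          = (∑ i ∈ univ.filter fun i => W i = false, γ i * ⟪μh, φ i⟫)
            - ∑ i ∈ univ.filter fun i => W i = false,
                (max (αh (G i) + ⟪βh (G i), φ i⟫) 0) * ⟪μh, φ i⟫ := by
        rw [← Finset.sum_sub_distrib]
        exact Finset.sum_congr rfl fun i _ => by ring
      rw [esplit, e2, e3, sub_self]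
    have hp2 : (∑ g : Fin K, αh g * ((∑ i ∈ univ.filter fun i => G i = g ∧ W i = false, γ i)
        - ∑ i ∈ univ.filter fun i => G i = g ∧ W i = false,
            max (αh (G i) + ⟪βh (G i), φ i⟫) 0)) = 0 := by
      apply Finset.sum_eq_zero
      intro g _
      rw [hγfine g, hfine g, sub_self, mul_zero]
    have hp3 : 0 ≤ ∑ g : Fin K, ∑ i ∈ univ.filter fun i => G i = g ∧ W i = false,
        (γ i - max (αh g + ⟪βh g, φ i⟫) 0) * max (-(αh g + ⟪βh g, φ i⟫)) 0 := by
      apply Finset.sum_nonneg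
      intro g _
      apply Finset.sum_nonneg
      intro i hi
      have hWi : W i = false := (Finset.mem_filter.mp hi).2.2
      have hγi := hγpos i hWi
      have hmm := max_mul_max_neg (αh g + ⟪βh g, φ i⟫)
      have hs : (0:ℝ) ≤ max (-(αh g + ⟪βh g, φ i⟫)) 0 := le_max_right _ _
      nlinarith [mul_nonneg hγi hs]
    linarith [hp1, hp2, hp3]
  have hfinal := Finset.sum_le_sum hkey
  rw [Finset.sum_add_distrib] at hfinal
  linarith [hRnonneg, hfinal]
end
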